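/- Let k ≥ 1 be an integer and λ, μ ∈ ℂ with 2(μ-λ) ∉ {0,1,...,2k}. Define C_{2ℓ,2} = binom(k-1, ℓ-1)·binom(k+2λ, ℓ+1)/binom(-2(μ-λ-k), ℓ+1). Then C_{2ℓ,4} := -((k-ℓ)(2(μ-λ-k)+ℓ))/(ℓ(k-ℓ+2λ)) · C_{2ℓ,2} satisfies the recurrence ℓ(ℓ-1+2(μ-λ-k))C_{2ℓ,4} = -(k-ℓ)(k-ℓ+2λ+1)C_{2ℓ-2,4} for all 2 ≤ ℓ ≤ k-1 (assuming all denominators are nonzero). -/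
import Mathlib


noncomputable section

open Polynomial

/-- The Grassmann algebra `C^∞(S¹)[ξ₁,ξ₂]` (polynomial model in `x`):
an element `f₀ + ξ₁f₁ + ξ₂f₂ + ξ₁ξ₂f₁₂` is encoded by its four components. -/
abbrev Gr := Polynomial ℂ × Polynomial ℂ × Polynomial ℂ × Polynomial ℂ

namespace Gr

/-- Supercommutative multiplication. -/
def gmul (f g : Gr) : Gr :=
  (f.1 * g.1,
   f.1 * g.2.1 + f.2.1 * g.1,
   f.1 * g.2.2.1 + f.2.2.1 * g.1,
   f.1 * g.2.2.2 + f.2.2.2 * g.1 + f.2.1 * g.2.2.1 - f.2.2.1 * g.2.1)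

/-- The even vector field `∂ₓ`. -/
def dX (f : Gr) : Gr :=
  (derivative f.1, derivative f.2.1, derivative f.2.2.1, derivative f.2.2.2)

/-- The left odd derivation `∂_{ξ₁}`. -/
def dXi1 (f : Gr) : Gr := (f.2.1, 0, f.2.2.2, 0)

/-- The left odd derivation `∂_{ξ₂}`. -/
def dXi2 (f : Gr) : Gr := (f.2.2.1, -f.2.2.2, 0, 0)

def xi1 : Gr := (0, 1, 0, 0)
def xi2 : Gr := (0, 0, 1, 0)
def xi12 : Gr := (0, 0, 0, 1)
def oneG : Gr := (1, 0, 0, 0)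
def xG : Gr := (Polynomial.X, 0, 0, 0)

/-- `D̄₁ = ∂_{ξ₁} - ξ₁∂ₓ`. -/
def D1b (f : Gr) : Gr := dXi1 f - gmul xi1 (dX f)
/-- `D̄₂ = ∂_{ξ₂} - ξ₂∂ₓ`. -/
def D2b (f : Gr) : Gr := dXi2 f - gmul xi2 (dX f)
/-- `D₁ = ∂_{ξ₁} + ξ₁∂ₓ`. -/
def Dp1 (f : Gr) : Gr := dXi1 f + gmul xi1 (dX f)
/-- `D₂ = ∂_{ξ₂} + ξ₂∂ₓ`. -/
def Dp2 (f : Gr) : Gr := dXi2 f + gmul xi2 (dX f)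

/-- `f` is homogeneous of parity `p` (`false` = even, `true` = odd). -/
def IsHom (f : Gr) (p : Bool) : Prop :=
  if p then f.1 = 0 ∧ f.2.2.2 = 0 else f.2.1 = 0 ∧ f.2.2.1 = 0

/-- `(-1)^p`. -/
def sgn (p : Bool) : ℂ := if p then -1 else 1

/-- The contact vector field `X_f = f∂ₓ - (-1)^{p(f)} ½(D̄₁(f)D̄₁ + D̄₂(f)D̄₂)`. -/
def Xv (f : Gr) (p : Bool) (F : Gr) : Gr :=
  gmul f (dX F) - (sgn p * (1/2 : ℂ)) • (gmul (D1b f) (D1b F) + gmul (D2b f) (D2b F))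

/-- The Lie derivative `L^λ_{X_f} = X_f + λ f′` on λ-densities. -/
def L (lam : ℂ) (f : Gr) (p : Bool) (F : Gr) : Gr :=
  Xv f p F + lam • gmul (dX f) F

/-- The contact bracket `{f,g} = fg' - f'g - (-1)^{p(f)} ½(D̄₁(f)D̄₁(g) + D̄₂(f)D̄₂(g))`. -/
def cbr (f : Gr) (p : Bool) (g : Gr) : Gr :=
  gmul f (dX g) - gmul (dX f) g
    - (sgn p * (1/2 : ℂ)) • (gmul (D1b f) (D1b g) + gmul (D2b f) (D2b g))

/-- Generalized binomial coefficient `z(z-1)⋯(z-m+1)/m!`. -/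
noncomputable def cbinom (z : ℂ) (m : ℕ) : ℂ :=
  (∏ i ∈ Finset.range m, (z - i)) / (Nat.factorial m)


/-- `C_{2ℓ,2} = binom(k-1,ℓ-1)·binom(k+2λ,ℓ+1)/binom(-2(μ-λ-k),ℓ+1)`. -/
noncomputable def C2f (k : ℕ) (lam mu : ℂ) (ℓ : ℕ) : ℂ :=
  cbinom ((k : ℂ) - 1) (ℓ-1) * cbinom ((k : ℂ) + 2*lam) (ℓ+1)
    / cbinom (-2*(mu - lam - (k : ℂ))) (ℓ+1)

/-- `C_{2ℓ,4} = -((k-ℓ)(2(μ-λ-k)+ℓ))/(ℓ(k-ℓ+2λ)) · C_{2ℓ,2}`. -/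
noncomputable def C4f (k : ℕ) (lam mu : ℂ) (ℓ : ℕ) : ℂ :=
  -(((k : ℂ) - ℓ) * (2*(mu - lam - (k : ℂ)) + ℓ)) / ((ℓ : ℂ) * ((k : ℂ) - ℓ + 2*lam))
    * C2f k lam mu ℓ


lemma cbinom_succ (z : ℂ) (m : ℕ) :
    cbinom z (m+1) = cbinom z m * (z - m) / (m+1) := by
  unfold cbinom
  rw [Finset.prod_range_succ, Nat.factorial_succ]
  push_cast
  rw [div_mul_eq_mul_div, div_div, mul_comm ((Nat.factorial m : ℂ))]

set_option maxHeartbeats 1000000 in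
/-- `C_{2ℓ,4}` satisfies the recurrence
`ℓ(ℓ-1+2(μ-λ-k))C_{2ℓ,4} = -(k-ℓ)(k-ℓ+2λ+1)C_{2ℓ-2,4}` for `2 ≤ ℓ ≤ k-1`
(assuming the denominators are nonzero). -/
theorem stmt9 (k : ℕ) (hk : 1 ≤ k) (lam mu : ℂ)
    (hres : ∀ j : ℕ, j ≤ 2*k → 2*(mu - lam) ≠ (j : ℂ)) :
    ∀ ℓ : ℕ, 2 ≤ ℓ → ℓ ≤ k - 1 →
      ((k : ℂ) - ℓ + 2*lam) ≠ 0 → ((k : ℂ) - (ℓ - 1 : ℕ) + 2*lam) ≠ 0 →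
      cbinom (-2*(mu - lam - (k : ℂ))) (ℓ+1) ≠ 0 →
      cbinom (-2*(mu - lam - (k : ℂ))) ℓ ≠ 0 →
      (ℓ : ℂ) * ((ℓ : ℂ) - 1 + 2*(mu - lam - (k : ℂ))) * C4f k lam mu ℓ
        = -(((k : ℂ) - ℓ) * ((k : ℂ) - ℓ + 2*lam + 1)) * C4f k lam mu (ℓ-1) := by
  rintro ℓ hℓ2 hℓk hden1 hden2 h3 h4
  obtain ⟨m, rfl⟩ : ∃ m, ℓ = m + 2 := ⟨ℓ - 2, by omega⟩
  have hk3 : m + 3 ≤ k := by omega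
  have ha : (-2*(mu - lam - (k:ℂ)) - ((m:ℂ)+2)) ≠ 0 := by
    intro h
    apply hres (2*k - (m+2)) (by omega)
    have hc : ((2*k - (m+2) : ℕ) : ℂ) = 2*(k:ℂ) - ((m:ℂ)+2) := by
      push_cast [Nat.cast_sub (show m+2 ≤ 2*k by omega)]
      ring
    rw [hc]
    linear_combination -h
  have hm1 : ((m:ℂ)+1) ≠ 0 := Nat.cast_add_one_ne_zero m
  have hm2 : ((m:ℂ)+2) ≠ 0 := by intro h; exact_mod_cast h
  have hm3 : ((m:ℂ)+3) ≠ 0 := by intro h; exact_mod_cast h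
  simp only [C4f, C2f, show m+2-1 = m+1 from rfl, show m+1-1 = m from rfl,
    show m+1+1 = m+2 from rfl]
  rw [cbinom_succ ((k:ℂ)-1) m, cbinom_succ ((k:ℂ)+2*lam) (m+2),
    cbinom_succ (-2*(mu - lam - (k:ℂ))) (m+2)]
  have h4' : cbinom (-2*(mu - lam - (k:ℂ))) (m+2) ≠ 0 := h4
  generalize cbinom ((k:ℂ)-1) m = B1
  generalize cbinom ((k:ℂ)+2*lam) (m+2) = B2
  generalize hB3 : cbinom (-2*(mu - lam - (k:ℂ))) (m+2) = B3
  rw [hB3] at h4'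
  push_cast at hden1 hden2 ⊢
  have hm3' : ((m:ℂ)+2+1) ≠ 0 := by
    rw [show ((m:ℂ)+2+1) = (m:ℂ)+3 by ring]; exact hm3
  have ha' : (-(2*(mu - lam - (k:ℂ))) - ((m:ℂ)+2)) ≠ 0 := by
    rw [show (-(2*(mu - lam - (k:ℂ))) - ((m:ℂ)+2)) = -2*(mu - lam - (k:ℂ)) - ((m:ℂ)+2) by ring]
    exact ha
  field_simp
  ring

end Gr
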